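/- Let ħ, u be complex numbers, V₀ and V₋₁ one-dimensional complex vector spaces, and scalars b₁ (= B_{1,−1} : V₋₁ → V₀), b₂ (= B_{2,0} : V₀ → V₋₁), i₀, j₀, i₋₁, j₋₁ ∈ ℂ satisfying b₁b₂ + i₀j₀ = ħ and −b₂b₁ + i₋₁j₋₁ = ħ. Define the 2×2 matrix S(u) with entries S₁₁ = 1 + j₀i₀/u, S₁₂ = j₋₁b₂i₀/u, S₂₁ = j₀b₁i₋₁/u, S₂₂ = j₋₁b₂b₁i₋₁/u + j₋₁i₋₁ + u + ħ. Then det S(u) = (u+ħ)(u+2ħ)/u for all u ≠ 0. -/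

import Mathlib

/-- The `A₂` surface example: the monopole scattering matrix extracted from the
instanton one has determinant `(u+ħ)(u+2ħ)/u`. -/
theorem a2_scattering_det
    (hbar u : ℂ) (hu : u ≠ 0)
    (b1 b2 i0 j0 im1 jm1 : ℂ)
    (h1 : b1 * b2 + i0 * j0 = hbar)
    (h2 : -(b2 * b1) + im1 * jm1 = hbar) :
    Matrix.det
        !![1 + j0 * i0 / u, jm1 * b2 * i0 / u;
           j0 * b1 * im1 / u, jm1 * b2 * b1 * im1 / u + jm1 * im1 + u + hbar]
      = (u + hbar) * (u + 2 * hbar) / u := by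
  rw [Matrix.det_fin_two_of]
  field_simp
  linear_combination (u * (u + hbar + jm1 * im1)) * h1 + (u * (u + hbar)) * h2
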